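/- Let X be a compact metric space and let S ⊆ C(ℝ,X) be a nonempty shift-invariant set satisfying the compactness axiom. Then there exists an invariant measure for S on X; that is, there exist a Borel probability measure ν on C(ℝ,X) with ν(S) = 1 which is invariant under the shift σ(t,·) for every t ∈ ℝ, and a Borel probability measure μ on X with μ = π_*ν (the pushforward of ν under evaluation at 0). -/

import Mathlib

open Set Filter Topology MeasureTheory BoundedContinuousFunction TopologicalSpace
open scoped Classical ENNReal NNReal
set_option synthInstance.maxHeartbeats 1000000
set_option maxHeartbeats 1000000

namespace AxODE

variable {X : Type*} [MetricSpace X]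

/-- The shift map `σ(t, φ)(s) = φ(s + t)` on `C(ℝ, X)`. -/
def shift (t : ℝ) (φ : C(ℝ, X)) : C(ℝ, X) :=
  ⟨fun s => φ (s + t), φ.continuous.comp (continuous_add_right t)⟩

/-- `S` is shift-invariant if `σ(t, φ) ∈ S` for all `t ∈ ℝ` and `φ ∈ S`. -/
def ShiftInvariant (S : Set C(ℝ, X)) : Prop :=
  ∀ (t : ℝ), ∀ φ ∈ S, shift t φ ∈ S

/-- The evaluation map `e_S : ℝ × S → ℝ × X`, `e_S(t, φ) = (t, φ(t))`. -/
def evalMap (S : Set C(ℝ, X)) : ℝ × S → ℝ × X :=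
  fun p => (p.1, (p.2 : C(ℝ, X)) p.1)

/-- `S` satisfies the compactness axiom if `e_S` is proper, i.e. the preimage under `e_S`
of every compact subset of `ℝ × X` is compact. -/
def CompactnessAxiom (S : Set C(ℝ, X)) : Prop :=
  ∀ K : Set (ℝ × X), IsCompact K → IsCompact (evalMap S ⁻¹' K)

/-! ### Auxiliary lemmas about the shift -/

lemma shift_apply (t : ℝ) (φ : C(ℝ, X)) (s : ℝ) : shift t φ s = φ (s + t) := rfl

lemma shift_shift (t s : ℝ) (φ : C(ℝ, X)) : shift t (shift s φ) = shift (s + t) φ :=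
  ContinuousMap.ext fun r => congrArg φ (by ring)

lemma shift_zero (φ : C(ℝ, X)) : shift 0 φ = φ :=
  ContinuousMap.ext fun r => congrArg φ (add_zero r)

lemma continuous_shift (t : ℝ) : Continuous (shift t : C(ℝ, X) → C(ℝ, X)) := by
  have h : (shift t : C(ℝ, X) → C(ℝ, X))
      = fun φ => φ.comp ⟨fun s => s + t, continuous_add_right t⟩ := rfl
  rw [h]
  exact ContinuousMap.continuous_precomp _

/-- The shift as a homeomorphism. -/
def homeoShift (t : ℝ) : C(ℝ, X) ≃ₜ C(ℝ, X) where
  toFun := shift t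
  invFun := shift (-t)
  left_inv φ := by rw [shift_shift, add_neg_cancel, shift_zero]
  right_inv φ := by rw [shift_shift, neg_add_cancel, shift_zero]
  continuous_toFun := continuous_shift t
  continuous_invFun := continuous_shift (-t)

lemma continuous_orbit (φ₀ : C(ℝ, X)) : Continuous fun t => shift t φ₀ := by
  have h : (fun t => shift t φ₀) =
      ⇑(ContinuousMap.curry ⟨fun p : ℝ × ℝ => φ₀ (p.2 + p.1),
        φ₀.continuous.comp (continuous_snd.add continuous_fst)⟩) := by
    funext t; ext s; rfl
  rw [h]
  exact ContinuousMap.continuous _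

/-! ### Ultrafilter limits of bounded real sequences -/

noncomputable def uf : Ultrafilter ℕ := Ultrafilter.of atTop

lemma uf_le_atTop : (uf : Filter ℕ) ≤ atTop := Ultrafilter.of_le _

noncomputable def ulim (u : ℕ → ℝ) : ℝ :=
  if h : ∃ L, Tendsto u (uf : Filter ℕ) (𝓝 L) then h.choose else 0

lemma exists_tendsto_uf {u : ℕ → ℝ} {M : ℝ} (hb : ∀ n, |u n| ≤ M) :
    ∃ L, Tendsto u (uf : Filter ℕ) (𝓝 L) := by
  have h1 : ((uf.map u : Ultrafilter ℝ) : Filter ℝ) ≤ 𝓟 (Icc (-M) M) := by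
    rw [Ultrafilter.coe_map, le_principal_iff]
    exact mem_map.2 (univ_mem' fun n => ⟨(abs_le.1 (hb n)).1, (abs_le.1 (hb n)).2⟩)
  obtain ⟨x, -, hx⟩ := isCompact_Icc.ultrafilter_le_nhds (uf.map u) h1
  refine ⟨x, ?_⟩
  rwa [Tendsto, ← Ultrafilter.coe_map]

lemma tendsto_ulim {u : ℕ → ℝ} {M : ℝ} (hb : ∀ n, |u n| ≤ M) :
    Tendsto u (uf : Filter ℕ) (𝓝 (ulim u)) := by
  rw [ulim, dif_pos (exists_tendsto_uf hb)]
  exact (exists_tendsto_uf hb).choose_spec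

lemma ulim_eq {u : ℕ → ℝ} {L : ℝ} (h : Tendsto u (uf : Filter ℕ) (𝓝 L)) : ulim u = L := by
  have he : ∃ L', Tendsto u (uf : Filter ℕ) (𝓝 L') := ⟨L, h⟩
  rw [ulim, dif_pos he]
  exact tendsto_nhds_unique he.choose_spec h

/-! ### The time average functional -/

/-- Average of `f` along the orbit of `φ₀` up to time `n+1`. -/
noncomputable def tavg (φ₀ : C(ℝ, X)) (f : C(ℝ, X) →ᵇ ℝ) (n : ℕ) : ℝ :=
  ((n : ℝ) + 1)⁻¹ * ∫ s in (0 : ℝ)..((n : ℝ) + 1), f (shift s φ₀)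

/-- Ultrafilter limit of the time averages. -/
noncomputable def lam (φ₀ : C(ℝ, X)) (f : C(ℝ, X) →ᵇ ℝ) : ℝ :=
  ulim (tavg φ₀ f)

lemma continuous_along_orbit (φ₀ : C(ℝ, X)) (f : C(ℝ, X) →ᵇ ℝ) :
    Continuous fun s : ℝ => f (shift s φ₀) :=
  f.continuous.comp (continuous_orbit φ₀)

lemma intervalIntegrable_along_orbit (φ₀ : C(ℝ, X)) (f : C(ℝ, X) →ᵇ ℝ) (a b : ℝ) :
    IntervalIntegrable (fun s => f (shift s φ₀)) volume a b :=
  (continuous_along_orbit φ₀ f).intervalIntegrable a b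

lemma tavg_abs_le (φ₀ : C(ℝ, X)) (f : C(ℝ, X) →ᵇ ℝ) (n : ℕ) :
    |tavg φ₀ f n| ≤ ‖f‖ := by
  have hn : (0 : ℝ) < (n : ℝ) + 1 := by positivity
  have h := intervalIntegral.norm_integral_le_of_norm_le_const
    (a := (0 : ℝ)) (b := (n : ℝ) + 1) (C := ‖f‖) (f := fun s => f (shift s φ₀))
    (fun x _ => f.norm_coe_le_norm _)
  rw [Real.norm_eq_abs] at h
  rw [tavg, abs_mul, abs_inv, abs_of_pos hn]
  calc ((n : ℝ) + 1)⁻¹ * |∫ s in (0 : ℝ)..((n : ℝ) + 1), f (shift s φ₀)|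
      ≤ ((n : ℝ) + 1)⁻¹ * (‖f‖ * |(n : ℝ) + 1 - 0|) := by
        exact mul_le_mul_of_nonneg_left h (by positivity)
    _ = ‖f‖ := by
        rw [sub_zero, abs_of_pos hn]
        field_simp
  
lemma tendsto_tavg (φ₀ : C(ℝ, X)) (f : C(ℝ, X) →ᵇ ℝ) :
    Tendsto (tavg φ₀ f) (uf : Filter ℕ) (𝓝 (lam φ₀ f)) :=
  tendsto_ulim (fun n => tavg_abs_le φ₀ f n)

lemma tavg_add (φ₀ : C(ℝ, X)) (f g : C(ℝ, X) →ᵇ ℝ) :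
    tavg φ₀ (f + g) = fun n => tavg φ₀ f n + tavg φ₀ g n := by
  funext n
  have h : ∫ s in (0 : ℝ)..((n : ℝ) + 1), (f + g) (shift s φ₀)
      = (∫ s in (0 : ℝ)..((n : ℝ) + 1), f (shift s φ₀))
        + ∫ s in (0 : ℝ)..((n : ℝ) + 1), g (shift s φ₀) := by
    rw [← intervalIntegral.integral_add (intervalIntegrable_along_orbit φ₀ f _ _)
      (intervalIntegrable_along_orbit φ₀ g _ _)]
    simp
  simp only [tavg, h]
  ring

lemma lam_add (φ₀ : C(ℝ, X)) (f g : C(ℝ, X) →ᵇ ℝ) :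
    lam φ₀ (f + g) = lam φ₀ f + lam φ₀ g := by
  apply ulim_eq
  rw [tavg_add]
  exact (tendsto_tavg φ₀ f).add (tendsto_tavg φ₀ g)

lemma lam_one (φ₀ : C(ℝ, X)) : lam φ₀ (1 : C(ℝ, X) →ᵇ ℝ) = 1 := by
  have h : tavg φ₀ (1 : C(ℝ, X) →ᵇ ℝ) = fun _ => (1 : ℝ) := by
    funext n
    have hn : (0 : ℝ) < (n : ℝ) + 1 := by positivity
    simp only [tavg, BoundedContinuousFunction.coe_one, Pi.one_apply,
      intervalIntegral.integral_const, sub_zero, smul_eq_mul, mul_one]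
    exact inv_mul_cancel₀ hn.ne'
  apply ulim_eq
  rw [h]
  exact tendsto_const_nhds

lemma lam_nonneg (φ₀ : C(ℝ, X)) {f : C(ℝ, X) →ᵇ ℝ} (hf : ∀ ψ, 0 ≤ f ψ) :
    0 ≤ lam φ₀ f := by
  refine ge_of_tendsto' (tendsto_tavg φ₀ f) fun n => ?_
  have hn : (0 : ℝ) < (n : ℝ) + 1 := by positivity
  refine mul_nonneg (by positivity) ?_
  exact intervalIntegral.integral_nonneg (by positivity) fun u _ => hf _

lemma one_le_lam {S : Set C(ℝ, X)} (hS : ShiftInvariant S) {φ₀ : C(ℝ, X)} (hφ₀ : φ₀ ∈ S)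
    {f : C(ℝ, X) →ᵇ ℝ} (hf : ∀ ψ ∈ S, 1 ≤ f ψ) : 1 ≤ lam φ₀ f := by
  refine ge_of_tendsto' (tendsto_tavg φ₀ f) fun n => ?_
  have hn : (0 : ℝ) < (n : ℝ) + 1 := by positivity
  have h1 : ((n : ℝ) + 1) ≤ ∫ s in (0 : ℝ)..((n : ℝ) + 1), f (shift s φ₀) := by
    have := intervalIntegral.integral_mono_on (μ := volume) (a := (0 : ℝ)) (b := (n : ℝ) + 1)
      (f := fun _ : ℝ => (1 : ℝ)) (g := fun s => f (shift s φ₀)) hn.le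
      (intervalIntegrable_const) (intervalIntegrable_along_orbit φ₀ f _ _)
      (fun x _ => hf _ (hS x φ₀ hφ₀))
    simpa using this
  calc (1 : ℝ) = ((n : ℝ) + 1)⁻¹ * ((n : ℝ) + 1) := (inv_mul_cancel₀ hn.ne').symm
    _ ≤ tavg φ₀ f n := mul_le_mul_of_nonneg_left h1 (by positivity)

/-- Shift invariance of the time average functional. -/
lemma lam_shift (φ₀ : C(ℝ, X)) (t : ℝ) (f : C(ℝ, X) →ᵇ ℝ) :
    lam φ₀ (f.compContinuous ⟨shift t, continuous_shift t⟩) = lam φ₀ f := by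
  set F : C(ℝ, X) →ᵇ ℝ := f.compContinuous ⟨shift t, continuous_shift t⟩ with hF
  set g : ℝ → ℝ := fun s => f (shift s φ₀) with hg
  have hgi : ∀ a b : ℝ, IntervalIntegrable g volume a b :=
    intervalIntegrable_along_orbit φ₀ f
  have key : tavg φ₀ F = fun n =>
      tavg φ₀ f n + ((n : ℝ) + 1)⁻¹ *
        ((∫ s in t..(0 : ℝ), g s) + ∫ s in ((n : ℝ) + 1)..((n : ℝ) + 1 + t), g s) := by
    funext n
    have h1 : ∫ s in (0 : ℝ)..((n : ℝ) + 1), F (shift s φ₀)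
        = ∫ s in (0 : ℝ)..((n : ℝ) + 1), g (s + t) := by
      refine intervalIntegral.integral_congr fun s _ => ?_
      show f (shift t (shift s φ₀)) = f (shift (s + t) φ₀)
      rw [shift_shift]
    have h2 : ∫ s in (0 : ℝ)..((n : ℝ) + 1), g (s + t)
        = ∫ s in t..((n : ℝ) + 1 + t), g s := by
      rw [intervalIntegral.integral_comp_add_right g t, zero_add]
    have A := intervalIntegral.integral_add_adjacent_intervals
      (hgi t ((n : ℝ) + 1)) (hgi ((n : ℝ) + 1) ((n : ℝ) + 1 + t))
    have B := intervalIntegral.integral_add_adjacent_intervals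
      (hgi t 0) (hgi 0 ((n : ℝ) + 1))
    have hsplit : ∫ s in t..((n : ℝ) + 1 + t), g s
        = (∫ s in t..(0 : ℝ), g s) + (∫ s in (0 : ℝ)..((n : ℝ) + 1), g s)
          + ∫ s in ((n : ℝ) + 1)..((n : ℝ) + 1 + t), g s := by
      linarith
    simp only [tavg, h1, h2, hsplit]
    ring
  have hd : Tendsto (fun n : ℕ => ((n : ℝ) + 1)⁻¹ *
      ((∫ s in t..(0 : ℝ), g s) + ∫ s in ((n : ℝ) + 1)..((n : ℝ) + 1 + t), g s))
      (uf : Filter ℕ) (𝓝 0) := by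
    have hb : ∀ n : ℕ, ‖((n : ℝ) + 1)⁻¹ *
        ((∫ s in t..(0 : ℝ), g s) + ∫ s in ((n : ℝ) + 1)..((n : ℝ) + 1 + t), g s)‖
        ≤ (1 / ((n : ℝ) + 1)) * (‖f‖ * |t| + ‖f‖ * |t|) := by
      intro n
      have hn : (0 : ℝ) < (n : ℝ) + 1 := by positivity
      have e1 : ‖∫ s in t..(0 : ℝ), g s‖ ≤ ‖f‖ * |t| := by
        have := intervalIntegral.norm_integral_le_of_norm_le_const
          (a := t) (b := (0 : ℝ)) (C := ‖f‖) (f := g)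
          (fun x _ => f.norm_coe_le_norm _)
        simpa [abs_sub_comm] using this
      have e2 : ‖∫ s in ((n : ℝ) + 1)..((n : ℝ) + 1 + t), g s‖ ≤ ‖f‖ * |t| := by
        have := intervalIntegral.norm_integral_le_of_norm_le_const
          (a := (n : ℝ) + 1) (b := (n : ℝ) + 1 + t) (C := ‖f‖) (f := g)
          (fun x _ => f.norm_coe_le_norm _)
        simpa using this
      rw [norm_mul, norm_inv, Real.norm_eq_abs, abs_of_pos hn, one_div]
      refine mul_le_mul_of_nonneg_left ?_ (by positivity)
      calc ‖(∫ s in t..(0 : ℝ), g s) + ∫ s in ((n : ℝ) + 1)..((n : ℝ) + 1 + t), g s‖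
          ≤ ‖∫ s in t..(0 : ℝ), g s‖ + ‖∫ s in ((n : ℝ) + 1)..((n : ℝ) + 1 + t), g s‖ :=
            norm_add_le _ _
        _ ≤ ‖f‖ * |t| + ‖f‖ * |t| := add_le_add e1 e2
    refine squeeze_zero_norm hb ?_
    have h0 : Tendsto (fun n : ℕ => (1 / ((n : ℝ) + 1)) * (‖f‖ * |t| + ‖f‖ * |t|))
        atTop (𝓝 0) := by
      have := tendsto_one_div_add_atTop_nhds_zero_nat.mul_const (‖f‖ * |t| + ‖f‖ * |t|)
      simpa using this
    exact h0.mono_left uf_le_atTop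
  have h2 : Tendsto (tavg φ₀ F) (uf : Filter ℕ) (𝓝 (lam φ₀ f + 0)) := by
    rw [key]
    exact (tendsto_tavg φ₀ f).add hd
  have := ulim_eq h2
  rw [add_zero] at this
  exact this

/-! ### The content associated with the functional -/

/-- Test functions for a set `K`: nonnegative bounded continuous functions that are `≥ 1` on
`K`. -/
def testSet (K : Set C(ℝ, X)) : Set (C(ℝ, X) →ᵇ ℝ) :=
  {f | (∀ x, 0 ≤ f x) ∧ ∀ x ∈ K, 1 ≤ f x}

lemma one_mem_testSet (K : Set C(ℝ, X)) : (1 : C(ℝ, X) →ᵇ ℝ) ∈ testSet K :=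
  ⟨fun x => by simp, fun x _ => by simp⟩

/-- The content value of a set. -/
noncomputable def lam0 (φ₀ : C(ℝ, X)) (K : Set C(ℝ, X)) : ℝ :=
  sInf (lam φ₀ '' testSet K)

lemma testSet_nonempty_image (φ₀ : C(ℝ, X)) (K : Set C(ℝ, X)) :
    (lam φ₀ '' testSet K).Nonempty :=
  ⟨lam φ₀ 1, 1, one_mem_testSet K, rfl⟩

lemma testSet_bddBelow_image (φ₀ : C(ℝ, X)) (K : Set C(ℝ, X)) :
    BddBelow (lam φ₀ '' testSet K) := by
  refine ⟨0, ?_⟩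
  rintro b ⟨f, hf, rfl⟩
  exact lam_nonneg φ₀ hf.1

lemma lam0_nonneg (φ₀ : C(ℝ, X)) (K : Set C(ℝ, X)) : 0 ≤ lam0 φ₀ K := by
  refine le_csInf (testSet_nonempty_image φ₀ K) ?_
  rintro b ⟨f, hf, rfl⟩
  exact lam_nonneg φ₀ hf.1

lemma lam0_le_lam (φ₀ : C(ℝ, X)) {K : Set C(ℝ, X)} {f : C(ℝ, X) →ᵇ ℝ}
    (hf : f ∈ testSet K) : lam0 φ₀ K ≤ lam φ₀ f :=
  csInf_le (testSet_bddBelow_image φ₀ K) (mem_image_of_mem _ hf)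

lemma lam0_le_one (φ₀ : C(ℝ, X)) (K : Set C(ℝ, X)) : lam0 φ₀ K ≤ 1 := by
  have := lam0_le_lam φ₀ (one_mem_testSet K)
  rwa [lam_one] at this

lemma lam0_mono (φ₀ : C(ℝ, X)) {K₁ K₂ : Set C(ℝ, X)} (h : K₁ ⊆ K₂) :
    lam0 φ₀ K₁ ≤ lam0 φ₀ K₂ := by
  refine csInf_le_csInf (testSet_bddBelow_image φ₀ K₁) (testSet_nonempty_image φ₀ K₂) ?_
  refine image_mono ?_
  rintro f ⟨hf0, hf1⟩
  exact ⟨hf0, fun x hx => hf1 x (h hx)⟩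

lemma lam0_union_le (φ₀ : C(ℝ, X)) (K₁ K₂ : Set C(ℝ, X)) :
    lam0 φ₀ (K₁ ∪ K₂) ≤ lam0 φ₀ K₁ + lam0 φ₀ K₂ := by
  refine le_of_forall_pos_le_add fun ε hε => ?_
  obtain ⟨b₁, ⟨f₁, hf₁, rfl⟩, hb₁⟩ :=
    Real.lt_sInf_add_pos (testSet_nonempty_image φ₀ K₁) (half_pos hε)
  obtain ⟨b₂, ⟨f₂, hf₂, rfl⟩, hb₂⟩ :=
    Real.lt_sInf_add_pos (testSet_nonempty_image φ₀ K₂) (half_pos hε)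
  have hf : f₁ + f₂ ∈ testSet (K₁ ∪ K₂) := by
    constructor
    · intro x
      have := hf₁.1 x; have := hf₂.1 x
      simp only [BoundedContinuousFunction.coe_add, Pi.add_apply]
      linarith
    · rintro x (hx | hx) <;>
        simp only [BoundedContinuousFunction.coe_add, Pi.add_apply]
      · have := hf₁.2 x hx; have := hf₂.1 x; linarith
      · have := hf₂.2 x hx; have := hf₁.1 x; linarith
  calc lam0 φ₀ (K₁ ∪ K₂) ≤ lam φ₀ (f₁ + f₂) := lam0_le_lam φ₀ hf
    _ = lam φ₀ f₁ + lam φ₀ f₂ := lam_add φ₀ f₁ f₂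
    _ ≤ (lam0 φ₀ K₁ + ε / 2) + (lam0 φ₀ K₂ + ε / 2) := add_le_add hb₁.le hb₂.le
    _ = lam0 φ₀ K₁ + lam0 φ₀ K₂ + ε := by ring

lemma le_lam0_union [CompactSpace X] (φ₀ : C(ℝ, X)) {K₁ K₂ : Set C(ℝ, X)} (hd : Disjoint K₁ K₂)
    (h₁ : IsClosed K₁) (h₂ : IsClosed K₂) :
    lam0 φ₀ K₁ + lam0 φ₀ K₂ ≤ lam0 φ₀ (K₁ ∪ K₂) := by
  refine le_csInf (testSet_nonempty_image φ₀ (K₁ ∪ K₂)) ?_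
  rintro b ⟨f, ⟨hf0, hf1⟩, rfl⟩
  obtain ⟨g, hg2, hg1, hg01⟩ := exists_continuous_zero_one_of_isClosed h₂ h₁ hd.symm
  have hb : ∀ x y : C(ℝ, X), dist (g x) (g y) ≤ 1 := by
    intro x y
    have hx := hg01 x; have hy := hg01 y
    rw [Real.dist_eq, abs_sub_le_iff]
    constructor <;> [skip; skip] <;>
      · simp only [mem_Icc] at hx hy; linarith
  let gB : C(ℝ, X) →ᵇ ℝ := ⟨g, 1, hb⟩
  have hgB01 : ∀ x, gB x ∈ Icc (0 : ℝ) 1 := hg01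
  have hmem₁ : f * gB ∈ testSet K₁ := by
    constructor
    · intro x
      exact mul_nonneg (hf0 x) (hgB01 x).1
    · intro x hx
      have hgx : gB x = 1 := hg1 hx
      have := hf1 x (mem_union_left _ hx)
      simp only [BoundedContinuousFunction.coe_mul, Pi.mul_apply, hgx, mul_one]
      exact this
  have hmem₂ : f * (1 - gB) ∈ testSet K₂ := by
    constructor
    · intro x
      have := (hgB01 x).2
      refine mul_nonneg (hf0 x) ?_
      simp only [BoundedContinuousFunction.coe_sub, BoundedContinuousFunction.coe_one,
        Pi.sub_apply, Pi.one_apply]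
      linarith
    · intro x hx
      have hgx : gB x = 0 := hg2 hx
      have := hf1 x (mem_union_right _ hx)
      simp only [BoundedContinuousFunction.coe_mul, BoundedContinuousFunction.coe_sub,
        BoundedContinuousFunction.coe_one, Pi.mul_apply, Pi.sub_apply, Pi.one_apply, hgx]
      simpa using this
  have hsum : f * gB + f * (1 - gB) = f := by
    ext x
    simp only [BoundedContinuousFunction.coe_add, BoundedContinuousFunction.coe_mul,
      BoundedContinuousFunction.coe_sub, BoundedContinuousFunction.coe_one,
      Pi.add_apply, Pi.mul_apply, Pi.sub_apply, Pi.one_apply]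
    ring
  calc lam0 φ₀ K₁ + lam0 φ₀ K₂ ≤ lam φ₀ (f * gB) + lam φ₀ (f * (1 - gB)) :=
        add_le_add (lam0_le_lam φ₀ hmem₁) (lam0_le_lam φ₀ hmem₂)
    _ = lam φ₀ (f * gB + f * (1 - gB)) := (lam_add φ₀ _ _).symm
    _ = lam φ₀ f := by rw [hsum]

lemma lam0_image_shift_le (φ₀ : C(ℝ, X)) (t : ℝ) (K : Set C(ℝ, X)) :
    lam0 φ₀ (shift t '' K) ≤ lam0 φ₀ K := by
  refine le_csInf (testSet_nonempty_image φ₀ K) ?_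
  rintro b ⟨f, ⟨hf0, hf1⟩, rfl⟩
  have hmem : f.compContinuous ⟨shift (-t), continuous_shift (-t)⟩ ∈ testSet (shift t '' K) := by
    constructor
    · intro x
      exact hf0 _
    · rintro x ⟨y, hy, rfl⟩
      have h : shift (-t) (shift t y) = y := by
        rw [shift_shift, add_neg_cancel, shift_zero]
      show (1 : ℝ) ≤ f (shift (-t) (shift t y))
      rw [h]
      exact hf1 y hy
  calc lam0 φ₀ (shift t '' K)
      ≤ lam φ₀ (f.compContinuous ⟨shift (-t), continuous_shift (-t)⟩) := lam0_le_lam φ₀ hmem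
    _ = lam φ₀ f := lam_shift φ₀ (-t) f

lemma lam0_image_shift (φ₀ : C(ℝ, X)) (t : ℝ) (K : Set C(ℝ, X)) :
    lam0 φ₀ (shift t '' K) = lam0 φ₀ K := by
  refine le_antisymm (lam0_image_shift_le φ₀ t K) ?_
  have h := lam0_image_shift_le φ₀ (-t) (shift t '' K)
  have hKK : shift (-t) '' (shift t '' K) = K := by
    rw [← image_comp]
    have hid : (shift (-t) : C(ℝ, X) → C(ℝ, X)) ∘ shift t = id := by
      funext ψ
      simp only [Function.comp_apply, id_eq]
      rw [shift_shift, add_neg_cancel, shift_zero]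
    rw [hid, image_id]
  rwa [hKK] at h

theorem exists_invariant_measure [CompactSpace X]
    [MeasurableSpace X] [BorelSpace X]
    [MeasurableSpace C(ℝ, X)] [BorelSpace C(ℝ, X)]
    (S : Set C(ℝ, X)) (hne : S.Nonempty) (hS : ShiftInvariant S)
    (hcpt : CompactnessAxiom S) :
    ∃ ν : Measure C(ℝ, X), IsProbabilityMeasure ν ∧ ν S = 1 ∧
      (∀ t : ℝ, Measure.map (shift t) ν = ν) ∧
      ∃ μ : Measure X, IsProbabilityMeasure μ ∧
        μ = Measure.map (fun φ : C(ℝ, X) => φ 0) ν := by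
  classical
  obtain ⟨φ₀, hφ₀⟩ := hne
  -- `S` is compact
  have hScpt : IsCompact S := by
    have h0 : IsCompact (evalMap S ⁻¹' (({0} : Set ℝ) ×ˢ (univ : Set X))) :=
      hcpt _ (isCompact_singleton.prod isCompact_univ)
    have heq : evalMap S ⁻¹' (({0} : Set ℝ) ×ˢ (univ : Set X))
        = ({0} : Set ℝ) ×ˢ (univ : Set S) := by
      ext ⟨r, ψ⟩
      exact ⟨fun h => ⟨h.1, trivial⟩, fun h => ⟨h.1, trivial⟩⟩
    rw [heq] at h0
    have h1 : IsCompact (Prod.snd '' (({0} : Set ℝ) ×ˢ (univ : Set S))) :=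
      h0.image continuous_snd
    have h2 : Prod.snd '' (({0} : Set ℝ) ×ˢ (univ : Set S)) = (univ : Set S) := by
      ext ψ
      constructor
      · intro _; trivial
      · intro _; exact ⟨((0 : ℝ), ψ), by simp⟩
    rw [h2] at h1
    have : CompactSpace S := isCompact_univ_iff.mp h1
    have := isCompact_range (continuous_subtype_val (p := fun x => x ∈ S))
    rwa [Subtype.range_coe] at this
  have hScl : IsClosed S := hScpt.isClosed
  -- the content
  set con : Content C(ℝ, X) :=
    { toFun := fun K => (lam0 φ₀ (K : Set C(ℝ, X))).toNNReal
      mono' := fun K₁ K₂ h => Real.toNNReal_mono (lam0_mono φ₀ h)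
      sup_disjoint' := by
        intro K₁ K₂ hd h₁ h₂
        have hre : lam0 φ₀ ((K₁ ⊔ K₂ : Compacts C(ℝ, X)) : Set C(ℝ, X))
            = lam0 φ₀ (K₁ : Set C(ℝ, X)) + lam0 φ₀ (K₂ : Set C(ℝ, X)) := by
          rw [Compacts.coe_sup]
          exact le_antisymm (lam0_union_le φ₀ _ _) (le_lam0_union φ₀ hd h₁ h₂)
        rw [hre, Real.toNNReal_add (lam0_nonneg φ₀ _) (lam0_nonneg φ₀ _)]
      sup_le' := by
        intro K₁ K₂
        calc (lam0 φ₀ ((K₁ ⊔ K₂ : Compacts C(ℝ, X)) : Set C(ℝ, X))).toNNReal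
            ≤ (lam0 φ₀ (K₁ : Set C(ℝ, X)) + lam0 φ₀ (K₂ : Set C(ℝ, X))).toNNReal := by
              refine Real.toNNReal_mono ?_
              rw [Compacts.coe_sup]
              exact lam0_union_le φ₀ _ _
          _ ≤ _ := Real.toNNReal_add_le } with hcon
  set ν : Measure C(ℝ, X) := con.measure with hν
  -- content values are at most one
  have hcon_le_one : ∀ K : Compacts C(ℝ, X), (con.toFun K : ℝ≥0∞) ≤ 1 := by
    intro K
    have h : con.toFun K ≤ 1 := by
      have h4 : con.toFun K = (lam0 φ₀ (K : Set C(ℝ, X))).toNNReal := rfl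
      rw [h4, ← Real.toNNReal_one]
      exact Real.toNNReal_mono (lam0_le_one φ₀ _)
    exact_mod_cast h
  have hcon_S : (1 : ℝ≥0∞) ≤ (con.toFun ⟨S, hScpt⟩ : ℝ≥0∞) := by
    have h1 : (1 : ℝ) ≤ lam0 φ₀ S := by
      refine le_csInf (testSet_nonempty_image φ₀ S) ?_
      rintro b ⟨f, ⟨hf0, hf1⟩, rfl⟩
      exact one_le_lam hS hφ₀ hf1
    have h : (1 : ℝ≥0) ≤ con.toFun ⟨S, hScpt⟩ := by
      have h4 : con.toFun ⟨S, hScpt⟩ = (lam0 φ₀ S).toNNReal := rfl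
      rw [h4, ← Real.toNNReal_one]
      exact Real.toNNReal_mono h1
    exact_mod_cast h
  -- total mass
  have hν_univ : ν univ = 1 := by
    rw [hν, Content.measure_apply _ MeasurableSet.univ,
      Content.outerMeasure_of_isOpen _ _ isOpen_univ]
    rw [Content.innerContent]
    refine le_antisymm (iSup₂_le fun K _ => hcon_le_one K) ?_
    exact le_iSup₂_of_le ⟨S, hScpt⟩ (subset_univ _) hcon_S
  have hprob : IsProbabilityMeasure ν := ⟨hν_univ⟩
  -- mass of S
  have hν_S : ν S = 1 := by
    refine le_antisymm ?_ ?_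
    · calc ν S ≤ ν univ := measure_mono (subset_univ S)
        _ = 1 := hν_univ
    · calc (1 : ℝ≥0∞) ≤ (con.toFun ⟨S, hScpt⟩ : ℝ≥0∞) := hcon_S
        _ ≤ con.outerMeasure S := con.le_outerMeasure_compacts ⟨S, hScpt⟩
        _ = ν S := by rw [hν, Content.measure_apply _ hScl.measurableSet]
  -- invariance
  have hinv : ∀ t : ℝ, Measure.map (shift t) ν = ν := by
    intro t
    have hmeas : Measurable (shift t : C(ℝ, X) → C(ℝ, X)) := (continuous_shift t).measurable
    refine Measure.ext fun A hA => ?_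
    rw [Measure.map_apply hmeas hA, hν, Content.measure_apply _ (hA.preimage hmeas),
      Content.measure_apply _ hA]
    have hKinv : ∀ ⦃K : Compacts C(ℝ, X)⦄,
        (con.toFun (K.map (homeoShift t) (homeoShift t).continuous) : ℝ≥0∞)
          = (con.toFun K : ℝ≥0∞) := by
      intro K
      have hKset : ((K.map (homeoShift t) (homeoShift t).continuous) : Set C(ℝ, X))
          = shift t '' (K : Set C(ℝ, X)) := rfl
      have h2 : lam0 φ₀ ((K.map (homeoShift t) (homeoShift t).continuous) : Set C(ℝ, X))
          = lam0 φ₀ (K : Set C(ℝ, X)) := by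
        rw [hKset, lam0_image_shift]
      have h3 : con.toFun (K.map (homeoShift t) (homeoShift t).continuous)
          = (lam0 φ₀ ((K.map (homeoShift t) (homeoShift t).continuous) : Set C(ℝ, X))).toNNReal :=
        rfl
      have h4 : con.toFun K = (lam0 φ₀ (K : Set C(ℝ, X))).toNNReal := rfl
      rw [h3, h4, h2]
    have := con.outerMeasure_preimage (homeoShift t) hKinv A
    exact this
  -- conclusion
  refine ⟨ν, hprob, hν_S, hinv, Measure.map (fun φ : C(ℝ, X) => φ 0) ν, ?_, rfl⟩
  have hcont : Continuous fun φ : C(ℝ, X) => φ 0 :=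
    ContinuousEvalConst.continuous_eval_const 0
  exact Measure.isProbabilityMeasure_map hcont.measurable.aemeasurable

end AxODE
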